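/- Let 0 < μ < 2, γ > 0, λ > 0, m > 0. Then there exist constants C₁ > 0 and C₂ ≥ 0 (depending on μ, γ, λ, m) such that for all ψ ∈ Q with ‖ψ‖² = m, E(ψ) ≥ C₁‖ψ‖²_Q − C₂, where E(ψ) = ½‖ψ'‖² − (2γ)⁻¹|ψ(0⁺)−ψ(0⁻)|² − λ(2μ+2)⁻¹‖ψ‖_{2μ+2}^{2μ+2}. -/

import Mathlib

set_option maxHeartbeats 1000000

open MeasureTheory Filter Set
open scoped RealInnerProductSpace

/-- The jump of a function at the origin: `ψ(0⁺) − ψ(0⁻)`. -/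
noncomputable def jumpC (ψ : ℝ → ℂ) : ℂ :=
  limUnder (nhdsWithin 0 (Ioi 0)) ψ - limUnder (nhdsWithin 0 (Iio 0)) ψ

/-- Membership in the energy space `Q = H¹(ℝ⁺) ⊕ H¹(ℝ⁻)`, with `ψ'` the
derivative of `ψ` on each half-line. -/
structure MemQ (ψ ψ' : ℝ → ℂ) : Prop where
  deriv_pos : ∀ x ∈ Ioi (0:ℝ), HasDerivWithinAt ψ (ψ' x) (Ioi 0) x
  deriv_neg : ∀ x ∈ Iio (0:ℝ), HasDerivWithinAt ψ (ψ' x) (Iio 0) x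
  l2 : Integrable (fun x => ‖ψ x‖^2)
  l2' : Integrable (fun x => ‖ψ' x‖^2)
  lim_pos : ∃ a : ℂ, Tendsto ψ (nhdsWithin 0 (Ioi 0)) (nhds a)
  lim_neg : ∃ a : ℂ, Tendsto ψ (nhdsWithin 0 (Iio 0)) (nhds a)

/-- The squared `Q`-norm `‖ψ‖² + ‖ψ'‖²`. -/
noncomputable def nQsq (ψ ψ' : ℝ → ℂ) : ℝ :=
  (∫ x, ‖ψ x‖^2) + ∫ x, ‖ψ' x‖^2

/-- The quadratic form of the attractive δ' interaction. -/
noncomputable def Fform (γ : ℝ) (ψ ψ' : ℝ → ℂ) : ℝ :=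
  (∫ x, ‖ψ' x‖^2) - γ⁻¹ * ‖jumpC ψ‖^2


/-- The NLS energy with an attractive δ' defect. -/
noncomputable def Efun (γ lam μ : ℝ) (ψ ψ' : ℝ → ℂ) : ℝ :=
  (1/2) * (∫ x, ‖ψ' x‖^2) - (1/(2*γ)) * ‖jumpC ψ‖^2
    - lam/(2*μ+2) * ∫ x, ‖ψ x‖ ^ (2*μ+2)

/-- Young-type inequality: a subunit power is dominated by `ε b + C`. -/
lemma subquad {θ ε : ℝ} (hθ0 : 0 < θ) (hθ1 : θ < 1) (hε : 0 < ε) :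
    ∃ C, 0 ≤ C ∧ ∀ b : ℝ, 0 ≤ b → b ^ θ ≤ ε * b + C := by
  have hθ1' : θ - 1 ≠ 0 := by linarith
  refine ⟨ε ^ (θ / (θ - 1)), Real.rpow_nonneg hε.le _, fun b hb => ?_⟩
  set R : ℝ := ε ^ (1 / (θ - 1)) with hRdef
  have hR0 : 0 < R := Real.rpow_pos_of_pos hε _
  rcases le_or_gt b R with h | h
  · have h1 : b ^ θ ≤ R ^ θ := Real.rpow_le_rpow hb h hθ0.le
    have h2 : R ^ θ = ε ^ (θ / (θ - 1)) := by
      rw [hRdef, ← Real.rpow_mul hε.le]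
      congr 1
      field_simp
    have : 0 ≤ ε * b := mul_nonneg hε.le hb
    linarith [h2 ▸ h1]
  · have hb0 : 0 < b := hR0.trans h
    have h1 : b ^ (θ - 1) ≤ R ^ (θ - 1) :=
      Real.rpow_le_rpow_of_nonpos hR0 h.le (by linarith)
    have h2 : R ^ (θ - 1) = ε := by
      rw [hRdef, ← Real.rpow_mul hε.le]
      rw [show 1 / (θ - 1) * (θ - 1) = 1 by field_simp, Real.rpow_one]
    have h3 : b ^ θ = b ^ (θ - 1) * b := by
      have h3' : b ^ θ = b ^ (θ - 1) * b ^ (1:ℝ) := by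
        rw [← Real.rpow_add hb0]; ring_nf
      rwa [Real.rpow_one] at h3'
    have h4 : b ^ (θ - 1) * b ≤ ε * b := by
      apply mul_le_mul_of_nonneg_right _ hb
      rw [← h2]; exact h1
    have hC : 0 ≤ ε ^ (θ / (θ - 1)) := Real.rpow_nonneg hε.le _
    calc b ^ θ = b ^ (θ - 1) * b := h3
      _ ≤ ε * b := h4
      _ ≤ ε * b + ε ^ (θ / (θ - 1)) := by linarith

/-- Core half-line estimate: sup bound and boundary-limit bound by `2∫‖f‖‖f'‖`. -/
lemma half_bound (f f' : ℝ → ℂ)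
    (hmf : AEStronglyMeasurable f (volume : Measure ℝ))
    (hmf' : AEStronglyMeasurable f' (volume : Measure ℝ))
    (hd : ∀ x ∈ Ioi (0:ℝ), HasDerivAt f (f' x) x)
    (h2 : Integrable (fun x => ‖f x‖^2))
    (h2' : Integrable (fun x => ‖f' x‖^2)) :
    (∀ x ∈ Ioi (0:ℝ), ‖f x‖^2 ≤ 2 * ∫ t, ‖f t‖ * ‖f' t‖) ∧
    (∀ a : ℂ, Tendsto f (nhdsWithin 0 (Ioi 0)) (nhds a) →
      ‖a‖^2 ≤ 2 * ∫ t, ‖f t‖ * ‖f' t‖) := by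
  set I : ℝ := ∫ t, ‖f t‖ * ‖f' t‖ with hIdef
  set g' : ℝ → ℝ := fun t => 2 * ⟪f t, f' t⟫ with hg'def
  have hsum : Integrable (fun t => ‖f t‖^2 + ‖f' t‖^2) := h2.add h2'
  have hmg' : AEStronglyMeasurable g' (volume : Measure ℝ) :=
    ((hmf.inner hmf')).const_mul 2
  have hg'bound : ∀ t : ℝ, ‖g' t‖ ≤ 2 * (‖f t‖ * ‖f' t‖) := by
    intro t
    have h1 : |⟪f t, f' t⟫| ≤ ‖f t‖ * ‖f' t‖ := abs_real_inner_le_norm _ _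
    calc ‖g' t‖ = 2 * |⟪f t, f' t⟫| := by
          rw [hg'def]; simp [Real.norm_eq_abs, abs_mul]
      _ ≤ 2 * (‖f t‖ * ‖f' t‖) := by linarith
  have hprodbound : ∀ t : ℝ, 2 * (‖f t‖ * ‖f' t‖) ≤ ‖f t‖^2 + ‖f' t‖^2 := by
    intro t; nlinarith [sq_nonneg (‖f t‖ - ‖f' t‖)]
  have hiprod : Integrable (fun t => 2 * (‖f t‖ * ‖f' t‖)) := by
    refine hsum.mono' (((hmf.norm.mul hmf'.norm)).const_mul 2) ?_
    filter_upwards with t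
    rw [Real.norm_eq_abs, abs_of_nonneg (by positivity)]
    exact hprodbound t
  have hig' : Integrable g' := by
    refine hsum.mono' hmg' ?_
    filter_upwards with t
    exact (hg'bound t).trans (hprodbound t)
  have hI2 : ∫ t, 2 * (‖f t‖ * ‖f' t‖) = 2 * I := by
    rw [hIdef, integral_const_mul]
  have hnormint : ∫ t, ‖g' t‖ ≤ 2 * I := by
    rw [← hI2]
    exact integral_mono_of_nonneg (Eventually.of_forall fun t => norm_nonneg _)
      hiprod (Eventually.of_forall hg'bound)
  have hI0 : 0 ≤ 2 * I := by
    rw [← hI2]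
    exact integral_nonneg fun t => by positivity
  -- derivative of ‖f‖²
  have hgd : ∀ x ∈ Ioi (0:ℝ), HasDerivAt (fun t => ‖f t‖^2) (g' x) x := by
    intro x hx
    have h := HasDerivAt.inner ℝ (hd x hx) (hd x hx)
    have h2eq : (fun t => ⟪f t, f t⟫) = fun t => ‖f t‖^2 := by
      funext t; exact real_inner_self_eq_norm_sq (f t)
    rw [h2eq] at h
    convert h using 1
    show (2:ℝ) * ⟪f x, f' x⟫ = ⟪f x, f' x⟫ + ⟪f' x, f x⟫
    rw [real_inner_comm (f' x) (f x)]
    ring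
    rfl
    rfl
  -- FTC bound
  have hftc : ∀ x y : ℝ, 0 < x → x ≤ y → ‖f x‖^2 ≤ ‖f y‖^2 + 2 * I := by
    intro x y hx hxy
    have huIcc : uIcc x y = Icc x y := uIcc_of_le hxy
    have heq : ∫ t in x..y, g' t = ‖f y‖^2 - ‖f x‖^2 := by
      apply intervalIntegral.integral_eq_sub_of_hasDerivAt
      · intro t ht
        rw [huIcc] at ht
        exact hgd t (lt_of_lt_of_le hx ht.1)
      · exact hig'.intervalIntegrable
    have habs : |∫ t in x..y, g' t| ≤ 2 * I := by
      calc |∫ t in x..y, g' t| = |∫ t in Ioc x y, g' t| := by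
            rw [intervalIntegral.integral_of_le hxy]
        _ ≤ ∫ t in Ioc x y, ‖g' t‖ := by
            rw [← Real.norm_eq_abs]
            exact norm_integral_le_integral_norm _
        _ ≤ ∫ t, ‖g' t‖ :=
            setIntegral_le_integral hig'.norm
              (Eventually.of_forall fun t => norm_nonneg _)
        _ ≤ 2 * I := hnormint
    have := abs_le.mp habs
    linarith [heq ▸ this.1, heq ▸ this.2]
  -- there exist points with small ‖f y‖²
  have hsmall : ∀ x : ℝ, ∀ c : ℝ, 0 < c → ∃ y, x ≤ y ∧ ‖f y‖^2 < c := by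
    intro x c hc
    by_contra h
    push_neg at h
    have hconst : Integrable (fun _ : ℝ => c) (volume.restrict (Ioi x)) := by
      refine (h2.restrict (s := Ioi x)).mono' aestronglyMeasurable_const ?_
      filter_upwards [ae_restrict_mem measurableSet_Ioi] with y hy
      rw [Real.norm_eq_abs, abs_of_pos hc]
      exact h y (le_of_lt hy)
    rw [integrable_const_iff] at hconst
    rcases hconst with h0 | hfin
    · exact hc.ne' h0
    · have hfin := hfin.measure_univ_lt_top
      rw [Measure.restrict_apply_univ, Real.volume_Ioi] at hfin
      exact (lt_irrefl _ hfin).elim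
  have hsup : ∀ x ∈ Ioi (0:ℝ), ‖f x‖^2 ≤ 2 * I := by
    intro x hx
    by_contra hcon
    push_neg at hcon
    obtain ⟨y, hxy, hy⟩ := hsmall x (‖f x‖^2 - 2 * I) (by linarith)
    have := hftc x y hx hxy
    linarith
  refine ⟨hsup, fun a ha => ?_⟩
  have htend : Tendsto (fun t => ‖f t‖^2) (nhdsWithin 0 (Ioi 0)) (nhds (‖a‖^2)) :=
    (ha.norm).pow 2
  refine le_of_tendsto htend ?_
  filter_upwards [self_mem_nhdsWithin] with x hx
  exact hsup x hx

theorem stmt17 (μ γ lam m : ℝ) (hμ0 : 0 < μ) (hμ : μ < 2) (hγ : 0 < γ)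
    (hlam : 0 < lam) (hm : 0 < m) :
    ∃ C₁ > 0, ∃ C₂ ≥ 0, ∀ ψ ψ' : ℝ → ℂ, MemQ ψ ψ' →
      (∫ x, ‖ψ x‖^2) = m →
      C₁ * nQsq ψ ψ' - C₂ ≤ Efun γ lam μ ψ ψ' := by
  have hμ2 : (0:ℝ) < 2*μ+2 := by linarith
  set sm : ℝ := Real.sqrt m with hsmdef
  have hsm0 : 0 < sm := Real.sqrt_pos.mpr hm
  have hsmsq : sm * sm = m := Real.mul_self_sqrt hm.le
  -- the two constants in front of the sublinear powers of B
  set k₁ : ℝ := (1/(2*γ)) * (8 * sm) with hk₁def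
  set k₂ : ℝ := lam/(2*μ+2) * ((2*sm) ^ μ * m) with hk₂def
  have hk₁0 : 0 < k₁ := by
    apply mul_pos (by positivity) (by positivity)
  have hk₂0 : 0 < k₂ := by
    have : (0:ℝ) < (2*sm) ^ μ := Real.rpow_pos_of_pos (by linarith) μ
    apply mul_pos (by positivity) (mul_pos this hm)
  obtain ⟨Ca, hCa0, hCa⟩ := subquad (θ := (1:ℝ)/2) (ε := 1/(8*(k₁+1)))
    (by norm_num) (by norm_num) (by positivity)
  obtain ⟨Cb, hCb0, hCb⟩ := subquad (θ := μ/2) (ε := 1/(8*(k₂+1)))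
    (by positivity) (by linarith) (by positivity)
  refine ⟨1/8, by norm_num, k₁*Ca + k₂*Cb + m/8,
    by positivity, fun ψ ψ' hQ hm2 => ?_⟩
  obtain ⟨ap, hap⟩ := hQ.lim_pos
  obtain ⟨an, han⟩ := hQ.lim_neg
  have hjump : jumpC ψ = ap - an := by
    rw [jumpC, hap.limUnder_eq, han.limUnder_eq]
  -- derivatives at interior points
  have hdp : ∀ x ∈ Ioi (0:ℝ), HasDerivAt ψ (ψ' x) x := fun x hx =>
    (hQ.deriv_pos x hx).hasDerivAt (Ioi_mem_nhds hx)
  have hdn : ∀ x ∈ Iio (0:ℝ), HasDerivAt ψ (ψ' x) x := fun x hx =>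
    (hQ.deriv_neg x hx).hasDerivAt (Iio_mem_nhds hx)
  -- measurability
  have hae0 : ∀ᵐ x : ℝ, x ≠ 0 := by
    rw [ae_iff]
    have hset : {x : ℝ | ¬ x ≠ 0} = {0} := by ext x; simp
    rw [hset]
    exact measure_singleton 0
  have hcont : ContinuousOn ψ ({(0:ℝ)}ᶜ) := by
    intro x hx
    rcases lt_or_gt_of_ne (by simpa using hx : x ≠ (0:ℝ)) with h | h
    · exact ((hdn x h).continuousAt).continuousWithinAt
    · exact ((hdp x h).continuousAt).continuousWithinAt
  have hmψ : AEStronglyMeasurable ψ (volume : Measure ℝ) := by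
    have := hcont.aestronglyMeasurable (μ := (volume : Measure ℝ))
      (isClosed_singleton (x := (0:ℝ))).isOpen_compl.measurableSet
    rwa [MeasureTheory.restrict_compl_singleton] at this
  have hψ'ae : ψ' =ᵐ[volume] deriv ψ := by
    filter_upwards [hae0] with x hx
    rcases lt_or_gt_of_ne hx with h | h
    · exact ((hdn x h).deriv).symm
    · exact ((hdp x h).deriv).symm
  have hmψ' : AEStronglyMeasurable ψ' (volume : Measure ℝ) :=
    (aestronglyMeasurable_deriv ψ volume).congr hψ'ae.symm
  set I : ℝ := ∫ t, ‖ψ t‖ * ‖ψ' t‖ with hIdef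
  have hI0 : 0 ≤ I := integral_nonneg fun t => by positivity
  obtain ⟨hsupP, hlimP⟩ := half_bound ψ ψ' hmψ hmψ' hdp hQ.l2 hQ.l2'
  -- reflected function for the negative half-line
  set φ : ℝ → ℂ := fun x => ψ (-x) with hφdef
  set φ' : ℝ → ℂ := fun x => -ψ' (-x) with hφ'def
  have hmpneg : MeasurePreserving (fun x : ℝ => -x) volume volume :=
    Measure.measurePreserving_neg _
  have hembneg : MeasurableEmbedding (fun x : ℝ => -x) :=
    (Homeomorph.neg ℝ).isClosedEmbedding.measurableEmbedding
  have hmφ : AEStronglyMeasurable φ (volume : Measure ℝ) :=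
    hmψ.comp_measurePreserving hmpneg
  have hmφ' : AEStronglyMeasurable φ' (volume : Measure ℝ) :=
    (hmψ'.comp_measurePreserving hmpneg).neg
  have hdφ : ∀ x ∈ Ioi (0:ℝ), HasDerivAt φ (φ' x) x := by
    intro x hx
    have h1 : HasDerivAt ψ (ψ' (-x)) (-x) := hdn (-x) (by simpa using hx)
    have h2 : HasDerivAt (fun t : ℝ => -t) (-1 : ℝ) x := (hasDerivAt_id x).neg
    have := h1.scomp x h2
    simpa [hφdef, hφ'def, Function.comp_def] using this
  have hl2φ : Integrable (fun x => ‖φ x‖^2) := hQ.l2.comp_neg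
  have hl2φ' : Integrable (fun x => ‖φ' x‖^2) := by
    have := hQ.l2'.comp_neg
    simpa [hφ'def] using this
  have hIφ : (∫ t, ‖φ t‖ * ‖φ' t‖) = I := by
    rw [hIdef]
    have : (fun t : ℝ => ‖φ t‖ * ‖φ' t‖) = fun t => ‖ψ (-t)‖ * ‖ψ' (-t)‖ := by
      funext t; simp [hφdef, hφ'def]
    rw [this]
    exact integral_neg_eq_self (fun t => ‖ψ t‖ * ‖ψ' t‖) volume
  obtain ⟨hsupN', hlimN'⟩ := half_bound φ φ' hmφ hmφ' hdφ hl2φ hl2φ'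
  rw [hIφ] at hsupN' hlimN'
  have hlimφ : Tendsto φ (nhdsWithin 0 (Ioi 0)) (nhds an) := by
    have hneg : Tendsto (fun x : ℝ => -x) (nhdsWithin 0 (Ioi 0))
        (nhdsWithin 0 (Iio 0)) := by
      rw [tendsto_nhdsWithin_iff]
      constructor
      · simpa using ((continuous_neg.tendsto (0:ℝ)).mono_left nhdsWithin_le_nhds)
      · filter_upwards [self_mem_nhdsWithin] with x hx
        simpa using hx
    exact han.comp hneg
  have hlimN : ‖an‖^2 ≤ 2 * I := hlimN' an hlimφ
  have hlimP2 : ‖ap‖^2 ≤ 2 * I := hlimP ap hap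
  -- pointwise sup bound off the origin
  have hsup : ∀ x : ℝ, x ≠ 0 → ‖ψ x‖^2 ≤ 2 * I := by
    intro x hx
    rcases lt_or_gt_of_ne hx with h | h
    · have := hsupN' (-x) (by simpa using h)
      simpa [hφdef] using this
    · exact hsupP x h
  -- Cauchy-Schwarz: I ≤ √m √B
  set B : ℝ := ∫ x, ‖ψ' x‖^2 with hBdef
  have hB0 : 0 ≤ B := integral_nonneg fun x => by positivity
  set sB : ℝ := Real.sqrt B with hsBdef
  have hsB0 : 0 ≤ sB := Real.sqrt_nonneg B
  have hsBsq : sB * sB = B := Real.mul_self_sqrt hB0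
  have hIt : ∀ t : ℝ, 0 < t → I ≤ (t * m + t⁻¹ * B)/2 := by
    intro t ht
    have hint : Integrable (fun x => (t * ‖ψ x‖^2 + t⁻¹ * ‖ψ' x‖^2)/2) :=
      ((hQ.l2.const_mul t).add (hQ.l2'.const_mul t⁻¹)).div_const 2
    have hle : I ≤ ∫ x, (t * ‖ψ x‖^2 + t⁻¹ * ‖ψ' x‖^2)/2 := by
      apply integral_mono_of_nonneg
        (Eventually.of_forall fun x => by positivity) hint
      filter_upwards with x
      have h1 : 0 < t⁻¹ := inv_pos.mpr ht
      have key : t * ‖ψ x‖^2 + t⁻¹ * ‖ψ' x‖^2 - 2*(‖ψ x‖ * ‖ψ' x‖)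
          = (t * ‖ψ x‖ - ‖ψ' x‖)^2 * t⁻¹ := by
        field_simp
        ring
      linarith [key, mul_nonneg (sq_nonneg (t * ‖ψ x‖ - ‖ψ' x‖)) h1.le]
    have heq : ∫ x, (t * ‖ψ x‖^2 + t⁻¹ * ‖ψ' x‖^2)/2
        = (t * m + t⁻¹ * B)/2 := by
      rw [integral_div, integral_add (hQ.l2.const_mul t) (hQ.l2'.const_mul t⁻¹),
        integral_const_mul, integral_const_mul, hm2, hBdef]
    linarith [heq ▸ hle]
  have hICS : I ≤ sm * sB := by
    rcases eq_or_lt_of_le hB0 with hB | hB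
    · have hIle : ∀ ε : ℝ, 0 < ε → I ≤ ε := by
        intro ε hε
        have ht : (0:ℝ) < 2*ε/m := by positivity
        have := hIt (2*ε/m) ht
        have hB' : B = 0 := hB.symm
        rw [hB'] at this
        have : I ≤ (2*ε/m * m)/2 := by
          calc I ≤ (2*ε/m * m + (2*ε/m)⁻¹ * 0)/2 := this
            _ = (2*ε/m * m)/2 := by ring
        calc I ≤ (2*ε/m * m)/2 := this
          _ = ε := by field_simp
      have hI00 : I ≤ 0 := by
        by_contra h
        push_neg at h
        linarith [hIle (I/2) (by linarith)]
      have : sB = 0 := by rw [hsBdef, ← hB, Real.sqrt_zero]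
      rw [this, mul_zero]
      exact hI00
    · have hsB0' : 0 < sB := Real.sqrt_pos.mpr hB
      have ht : (0:ℝ) < sB/sm := by positivity
      have := hIt (sB/sm) ht
      have heq : (sB/sm * m + (sB/sm)⁻¹ * B)/2 = sm * sB := by
        rw [inv_div]
        field_simp
        nlinarith [hsmsq, hsBsq]
      linarith [heq ▸ this]
  have h2I : 2 * I ≤ 2 * sm * sB := by linarith
  -- jump bound
  have hJ : ‖jumpC ψ‖^2 ≤ 8 * sm * sB := by
    rw [hjump]
    have h1 : ‖ap - an‖ ≤ ‖ap‖ + ‖an‖ := norm_sub_le _ _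
    nlinarith [norm_nonneg (ap - an), norm_nonneg ap, norm_nonneg an,
      sq_nonneg (‖ap‖ - ‖an‖), hlimP2, hlimN, h2I]
  -- Gagliardo-Nirenberg-type bound
  set D : ℝ := 2 * I with hDdef
  have hD0 : 0 ≤ D := by positivity
  have hGN : (∫ x, ‖ψ x‖ ^ (2*μ+2)) ≤ D ^ μ * m := by
    have hpt : ∀ᵐ x : ℝ, ‖ψ x‖ ^ (2*μ+2) ≤ D ^ μ * ‖ψ x‖^2 := by
      filter_upwards [hae0] with x hx
      have hr0 : (0:ℝ) ≤ ‖ψ x‖ := norm_nonneg _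
      have hrD : ‖ψ x‖^2 ≤ D := hsup x hx
      have e1 : ‖ψ x‖ ^ (2*μ+2) = ‖ψ x‖ ^ (2*μ) * ‖ψ x‖ ^ (2:ℝ) := by
        rw [← Real.rpow_add' hr0 (by positivity)]
      have e2 : ‖ψ x‖ ^ ((2:ℝ)*μ) = (‖ψ x‖ ^ (2:ℝ)) ^ μ :=
        Real.rpow_mul hr0 2 μ
      have e3 : ‖ψ x‖ ^ (2:ℝ) = ‖ψ x‖^2 := by
        rw [show ((2:ℝ) = ((2:ℕ):ℝ)) by norm_num, Real.rpow_natCast]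
      rw [e1, e2, e3]
      apply mul_le_mul_of_nonneg_right _ (by positivity)
      exact Real.rpow_le_rpow (by positivity) hrD hμ0.le
    have hintD : Integrable (fun x => D ^ μ * ‖ψ x‖^2) := hQ.l2.const_mul _
    calc (∫ x, ‖ψ x‖ ^ (2*μ+2))
        ≤ ∫ x, D ^ μ * ‖ψ x‖^2 := by
          apply integral_mono_of_nonneg
            (Eventually.of_forall fun x => by positivity) hintD hpt
      _ = D ^ μ * m := by rw [integral_const_mul, hm2]
  have hDpow : D ^ μ ≤ (2*sm) ^ μ * sB ^ μ := by
    have h1 : D ^ μ ≤ (2*sm*sB) ^ μ := Real.rpow_le_rpow hD0 h2I hμ0.le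
    have h2 : (2*sm*sB) ^ μ = (2*sm) ^ μ * sB ^ μ :=
      Real.mul_rpow (by positivity) hsB0
    linarith [h2 ▸ h1]
  -- sublinear powers of B
  have hu : sB = B ^ ((1:ℝ)/2) := by rw [hsBdef, Real.sqrt_eq_rpow]
  have hv : sB ^ μ = B ^ (μ/2) := by
    rw [hu, ← Real.rpow_mul hB0, show (1:ℝ)/2*μ = μ/2 by ring]
  have hCa' : B ^ ((1:ℝ)/2) ≤ 1/(8*(k₁+1)) * B + Ca := hCa B hB0
  have hCb' : B ^ (μ/2) ≤ 1/(8*(k₂+1)) * B + Cb := hCb B hB0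
  -- assemble
  have hJterm : (1/(2*γ)) * ‖jumpC ψ‖^2 ≤ B/8 + k₁ * Ca := by
    have h1 : (1/(2*γ)) * ‖jumpC ψ‖^2 ≤ (1/(2*γ)) * (8 * sm * sB) := by
      apply mul_le_mul_of_nonneg_left hJ (by positivity)
    have h2 : (1/(2*γ)) * (8 * sm * sB) = k₁ * sB := by rw [hk₁def]; ring
    have h3 : k₁ * sB ≤ k₁ * (1/(8*(k₁+1)) * B + Ca) := by
      apply mul_le_mul_of_nonneg_left _ hk₁0.le
      rw [hu]; exact hCa'
    have h4 : k₁ * (1/(8*(k₁+1)) * B) ≤ B/8 := by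
      have hq : k₁ * (1/(8*(k₁+1)) * B) = B * (k₁ / (8*(k₁+1))) := by ring
      have hq2 : k₁ / (8*(k₁+1)) ≤ 1/8 := by
        rw [div_le_div_iff₀ (by positivity) (by norm_num)]
        linarith
      have := mul_le_mul_of_nonneg_left hq2 hB0
      rw [hq]
      linarith
    nlinarith
  have hPterm : lam/(2*μ+2) * (∫ x, ‖ψ x‖ ^ (2*μ+2)) ≤ B/8 + k₂ * Cb := by
    have hc0 : (0:ℝ) < lam/(2*μ+2) := by positivity
    have h1 : lam/(2*μ+2) * (∫ x, ‖ψ x‖ ^ (2*μ+2))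
        ≤ lam/(2*μ+2) * (D ^ μ * m) := mul_le_mul_of_nonneg_left hGN hc0.le
    have h2 : lam/(2*μ+2) * (D ^ μ * m)
        ≤ lam/(2*μ+2) * ((2*sm) ^ μ * sB ^ μ * m) := by
      apply mul_le_mul_of_nonneg_left _ hc0.le
      apply mul_le_mul_of_nonneg_right hDpow hm.le
    have h3 : lam/(2*μ+2) * ((2*sm) ^ μ * sB ^ μ * m) = k₂ * sB ^ μ := by
      rw [hk₂def]; ring
    have h4 : k₂ * sB ^ μ ≤ k₂ * (1/(8*(k₂+1)) * B + Cb) := by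
      apply mul_le_mul_of_nonneg_left _ hk₂0.le
      rw [hv]; exact hCb'
    have h5 : k₂ * (1/(8*(k₂+1)) * B) ≤ B/8 := by
      have hq : k₂ * (1/(8*(k₂+1)) * B) = B * (k₂ / (8*(k₂+1))) := by ring
      have hq2 : k₂ / (8*(k₂+1)) ≤ 1/8 := by
        rw [div_le_div_iff₀ (by positivity) (by norm_num)]
        linarith
      have := mul_le_mul_of_nonneg_left hq2 hB0
      rw [hq]
      linarith
    nlinarith
  unfold nQsq Efun
  rw [hm2, ← hBdef]
  linarith [hJterm, hPterm]
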